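/- There is no term rewriting system P' such that for all expressions e and constructor terms t, t is in the CRWL-denotation of e under the program P = {f(X) → c(X,X), coin → 0, coin → 1} if and only if e rewrites to t in P' by ordinary term rewriting. -/

import Mathlib

namespace Stmt0

/-- Terms over the fixed signature: constructors `0`, `1` (nullary) and `c`
(binary), defined function symbols `f` (unary) and `coin` (nullary), plus the
semantic bottom constant `⊥`. -/
inductive T : Type where
  | bot : T
  | var : ℕ → T
  | zero : T
  | one : T
  | pair : T → T → T
  | f : T → T
  | coin : T

namespace T

/-- Substitution application. -/
def subst (σ : ℕ → T) : T → T
  | bot => bot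
  | var x => σ x
  | zero => zero
  | one => one
  | pair a b => pair (subst σ a) (subst σ b)
  | f a => f (subst σ a)
  | coin => coin

/-- Expressions (terms of the signature, without `⊥`). -/
inductive IsExp : T → Prop
  | var (x : ℕ) : IsExp (var x)
  | zero : IsExp zero
  | one : IsExp one
  | pair {a b : T} : IsExp a → IsExp b → IsExp (pair a b)
  | f {a : T} : IsExp a → IsExp (f a)
  | coin : IsExp coin

/-- Partial constructor terms (`CTerm_⊥`). -/
inductive IsPCT : T → Prop
  | bot : IsPCT bot
  | var (x : ℕ) : IsPCT (var x)
  | zero : IsPCT zero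
  | one : IsPCT one
  | pair {a b : T} : IsPCT a → IsPCT b → IsPCT (pair a b)

/-- Total constructor terms (`CTerm`). -/
inductive IsCT : T → Prop
  | var (x : ℕ) : IsCT (var x)
  | zero : IsCT zero
  | one : IsCT one
  | pair {a b : T} : IsCT a → IsCT b → IsCT (pair a b)

/-- The CRWL proof calculus for the fixed program
`P = { f(X) → c(X,X), coin → 0, coin → 1 }`: rules (B), (RR), (DC) and (OR),
the latter instantiated to the three program rules (with parameter passing by
a partial constructor term). -/
inductive CR : T → T → Prop
  | B (e : T) : CR e bot
  | RR (x : ℕ) : CR (var x) (var x)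
  | DCzero : CR zero zero
  | DCone : CR one one
  | DCpair {a b t s : T} : CR a t → CR b s → CR (pair a b) (pair t s)
  | ORf {a u t : T} : IsPCT u → CR a u → CR (pair u u) t → CR (f a) t
  | ORcoin0 {t : T} : CR zero t → CR coin t
  | ORcoin1 {t : T} : CR one t → CR coin t

/-- One-step ordinary term rewriting with an arbitrary term rewriting system
`P'` over this signature (substitutions range over expressions, i.e. are
⊥-free). -/
inductive Rw (P' : Set (T × T)) : T → T → Prop
  | root (l r : T) (σ : ℕ → T) :
      (l, r) ∈ P' → (∀ x, IsExp (σ x)) → Rw P' (subst σ l) (subst σ r)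
  | pairL {a a' b : T} : Rw P' a a' → Rw P' (pair a b) (pair a' b)
  | pairR {a b b' : T} : Rw P' b b' → Rw P' (pair a b) (pair a b')
  | fC {a a' : T} : Rw P' a a' → Rw P' (f a) (f a')

/-- Proposition: there is no term rewriting system `P'` such that, for every
expression `e` and total constructor term `t`, `t` belongs to the
CRWL-denotation of `e` under `P = { f(X) → c(X,X), coin → 0, coin → 1 }`
iff `e →* t` in `P'`. -/
lemma subst_subst (σ τ : ℕ → T) (t : T) :
    subst τ (subst σ t) = subst (fun x => subst τ (σ x)) t := by
  induction t <;> simp [subst, *]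

lemma IsExp.subst {σ : ℕ → T} (hσ : ∀ x, IsExp (σ x)) {t : T} (ht : IsExp t) :
    IsExp (T.subst σ t) := by
  induction ht with
  | var x => exact hσ x
  | zero => exact IsExp.zero
  | one => exact IsExp.one
  | pair _ _ ih1 ih2 => exact IsExp.pair ih1 ih2
  | f _ ih => exact IsExp.f ih
  | coin => exact IsExp.coin

lemma CR.bot_eq {t : T} (h : CR bot t) : t = bot := by cases h; rfl

lemma CR.zero_cases {t : T} (h : CR zero t) : t = bot ∨ t = zero := by
  cases h <;> simp

lemma CR.one_cases {t : T} (h : CR one t) : t = bot ∨ t = one := by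
  cases h <;> simp

lemma Rw.subst {P' : Set (T × T)} {a b : T} (h : Rw P' a b)
    (τ : ℕ → T) (hτ : ∀ x, IsExp (τ x)) :
    Rw P' (T.subst τ a) (T.subst τ b) := by
  induction h with
  | root l r σ hm hσ =>
      rw [subst_subst, subst_subst]
      exact Rw.root l r _ hm (fun x => (hσ x).subst hτ)
  | pairL _ ih => exact Rw.pairL ih
  | pairR _ ih => exact Rw.pairR ih
  | fC _ ih => exact Rw.fC ih

lemma Rws.subst {P' : Set (T × T)} {a b : T}
    (h : Relation.ReflTransGen (Rw P') a b)
    (τ : ℕ → T) (hτ : ∀ x, IsExp (τ x)) :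
    Relation.ReflTransGen (Rw P') (T.subst τ a) (T.subst τ b) :=
  Relation.ReflTransGen.lift _ (fun _ _ hs => hs.subst τ hτ) _ _ h

lemma Rws.pairL {P' : Set (T × T)} {a a' b : T}
    (h : Relation.ReflTransGen (Rw P') a a') :
    Relation.ReflTransGen (Rw P') (pair a b) (pair a' b) :=
  Relation.ReflTransGen.lift (fun x => pair x b) (fun _ _ hs => Rw.pairL hs) _ _ h

lemma Rws.pairR {P' : Set (T × T)} {a b b' : T}
    (h : Relation.ReflTransGen (Rw P') b b') :
    Relation.ReflTransGen (Rw P') (pair a b) (pair a b') :=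
  Relation.ReflTransGen.lift (fun x => pair a x) (fun _ _ hs => Rw.pairR hs) _ _ h

theorem no_simulating_trs :
    ¬ ∃ P' : Set (T × T),
      (∀ p ∈ P', IsExp p.1 ∧ IsExp p.2 ∧ ∀ x, p.1 ≠ var x) ∧
      (∀ e t : T, IsExp e → IsCT t →
        (CR e t ↔ Relation.ReflTransGen (Rw P') e t)) := by
  rintro ⟨P', -, hiff⟩
  -- f(var 0) →* pair (var 0) (var 0)
  have h1 : Relation.ReflTransGen (Rw P') (f (var 0)) (pair (var 0) (var 0)) := by
    refine (hiff _ _ (IsExp.f (IsExp.var 0)) (IsCT.pair (IsCT.var 0) (IsCT.var 0))).1 ?_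
    exact CR.ORf (IsPCT.var 0) (CR.RR 0) (CR.DCpair (CR.RR 0) (CR.RR 0))
  -- substitute var 0 ↦ coin
  have h2 : Relation.ReflTransGen (Rw P') (f coin) (pair coin coin) := by
    have := Rws.subst h1 (fun _ => coin) (fun _ => IsExp.coin)
    simpa [subst] using this
  have h0 : Relation.ReflTransGen (Rw P') coin zero :=
    (hiff _ _ IsExp.coin IsCT.zero).1 (CR.ORcoin0 CR.DCzero)
  have hone : Relation.ReflTransGen (Rw P') coin one :=
    (hiff _ _ IsExp.coin IsCT.one).1 (CR.ORcoin1 CR.DCone)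
  have h3 : Relation.ReflTransGen (Rw P') (f coin) (pair zero one) :=
    (h2.trans (Rws.pairL h0)).trans (Rws.pairR hone)
  have h4 : CR (f coin) (pair zero one) :=
    (hiff _ _ (IsExp.f IsExp.coin) (IsCT.pair IsCT.zero IsCT.one)).2 h3
  -- derive contradiction by inversion
  cases h4 with
  | ORf hu hcu hp =>
  rename_i u
  have hab : CR u zero ∧ CR u one := by
    cases hp with
    | DCpair ha hb => exact ⟨ha, hb⟩
  obtain ⟨ha, hb⟩ := hab
  -- CR coin u with u a PCT forces u ∈ {bot, zero, one}
  cases hcu with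
  | B => exact absurd ha.bot_eq (by simp)
  | ORcoin0 h' =>
      rcases h'.zero_cases with rfl | rfl
      · exact absurd ha.bot_eq (by simp)
      · rcases hb.zero_cases with h | h <;> simp at h
  | ORcoin1 h' =>
      rcases h'.one_cases with rfl | rfl
      · exact absurd ha.bot_eq (by simp)
      · rcases ha.one_cases with h | h <;> simp at h

end T

end Stmt0
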